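/- Let Z be an integrable real random variable whose law has no atoms and which is symmetric, i.e. Z and −Z have the same law. Define E : ℝ → ℝ by E(x) := E[min{x, max{x + Z, 0}}] for x ≥ 0 and E(x) := E[−max{x, min{x + Z, 0}}] for x ≤ 0 (the two formulas agree at x = 0, both giving 0). Then the function G(x) := −|x| + 2·E(x) is differentiable on all of ℝ, and G'(x) = 2·P[Z ≤ x] − 1 for every x ∈ ℝ; in particular G is differentiable at x = 0 with G'(0) = 0. -/

import Mathlib

open MeasureTheory ProbabilityTheory Set

lemma my_core {Ω : Type*} [MeasurableSpace Ω] (P : Measure Ω) [IsProbabilityMeasure P]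
    (Z : Ω → ℝ) (hZm : Measurable Z) {x : ℝ} (hx : 0 ≤ x) :
    ∫ ω, min x (max (x + Z ω) 0) ∂P = ∫ t in Set.Ioc 0 x, (P {ω | -Z ω < t}).toReal := by
  set S : Set (ℝ × Ω) := {p | p.1 ∈ Set.Ioc 0 x ∧ -Z p.2 < p.1} with hS
  have hSm : MeasurableSet S := by
    have h1 : MeasurableSet {p : ℝ × Ω | p.1 ∈ Set.Ioc 0 x} :=
      measurable_fst measurableSet_Ioc
    have h2 : MeasurableSet {p : ℝ × Ω | -Z p.2 < p.1} :=
      measurableSet_lt ((hZm.comp measurable_snd).neg) measurable_fst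
    exact h1.inter h2
  have key1 : (volume.prod P) S = ∫⁻ t in Set.Ioc 0 x, P {ω | -Z ω < t} := by
    rw [Measure.prod_apply hSm]
    have : ∀ t : ℝ, P (Prod.mk t ⁻¹' S)
        = (Set.Ioc 0 x).indicator (fun t => P {ω | -Z ω < t}) t := by
      intro t
      by_cases ht : t ∈ Set.Ioc 0 x
      · rw [Set.indicator_of_mem ht]
        congr 1
        refine Set.eq_of_subset_of_subset (fun ω h => h.2) (fun ω h => ?_)
        exact ⟨ht, h⟩
      · rw [Set.indicator_of_notMem ht]
        convert measure_empty
        · simp only [hS, Set.mem_setOf_eq, Set.preimage_setOf_eq]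
          ext ω; simp only [Set.mem_setOf_eq, Set.mem_empty_iff_false, iff_false]
          exact fun h => ht h.1
        · infer_instance
    simp_rw [this]
    rw [lintegral_indicator measurableSet_Ioc]
  have key2 : (volume.prod P) S = ∫⁻ ω, ENNReal.ofReal (min x (max (x + Z ω) 0)) ∂P := by
    rw [Measure.prod_apply_symm hSm]
    congr 1
    ext ω
    have hpre : (fun t => (t, ω)) ⁻¹' S = Set.Ioc (max 0 (-Z ω)) x := by
      ext t
      simp only [hS, Set.mem_preimage, Set.mem_setOf_eq, Set.mem_Ioc, max_lt_iff]
      constructor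
      · rintro ⟨⟨h1, h2⟩, h3⟩; exact ⟨⟨h1, h3⟩, h2⟩
      · rintro ⟨⟨h1, h3⟩, h2⟩; exact ⟨⟨h1, h2⟩, h3⟩
    rw [hpre, Real.volume_Ioc]
    rcases le_total 0 (x + Z ω) with h | h
    · have : max (x + Z ω) 0 = x + Z ω := max_eq_left h
      rw [this]
      congr 1
      rcases le_total 0 (-Z ω) with h2 | h2
      · rw [max_eq_right h2, min_eq_right (by linarith)]; ring_nf
      · rw [max_eq_left h2, min_eq_left (by linarith)]; ring
    · have : max (x + Z ω) 0 = 0 := max_eq_right h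
      rw [this, min_eq_right hx, ENNReal.ofReal_zero, ENNReal.ofReal_eq_zero,
        max_eq_right (by linarith : (0:ℝ) ≤ -Z ω)]
      linarith
  -- convert LHS
  have hmeas : Measurable fun ω => min x (max (x + Z ω) 0) :=
    measurable_const.min ((hZm.const_add x).max measurable_const)
  have hnn : ∀ ω, 0 ≤ min x (max (x + Z ω) 0) := fun ω => le_min hx (le_max_right _ _)
  have hL : ∫ ω, min x (max (x + Z ω) 0) ∂P
      = (∫⁻ ω, ENNReal.ofReal (min x (max (x + Z ω) 0)) ∂P).toReal := by
    rw [integral_eq_lintegral_of_nonneg_ae (Filter.Eventually.of_forall hnn)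
      hmeas.aestronglyMeasurable]
  have hmono : Monotone fun t : ℝ => (P {ω | -Z ω < t}).toReal := by
    intro a b hab
    exact ENNReal.toReal_mono (measure_ne_top _ _)
      (measure_mono fun ω h => lt_of_lt_of_le h hab)
  have hR : ∫ t in Set.Ioc 0 x, (P {ω | -Z ω < t}).toReal
      = (∫⁻ t in Set.Ioc 0 x, P {ω | -Z ω < t}).toReal := by
    rw [integral_eq_lintegral_of_nonneg_ae
      (Filter.Eventually.of_forall fun t => ENNReal.toReal_nonneg)
      hmono.measurable.aestronglyMeasurable]
    congr 1
    refine lintegral_congr fun t => ?_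
    exact ENNReal.ofReal_toReal (measure_ne_top _ _)
  rw [hL, hR, ← key1, ← key2]

open MeasureTheory ProbabilityTheory Set

lemma my_cont {Ω : Type*} [MeasurableSpace Ω] (P : Measure Ω) [IsProbabilityMeasure P]
    (Z : Ω → ℝ) (hZm : Measurable Z) (hatomless : ∀ z₀ : ℝ, P {ω | Z ω = z₀} = 0) :
    Continuous (fun t : ℝ => (P {ω | Z ω ≤ t}).toReal) := by
  have hpm : IsProbabilityMeasure (P.map Z) := Measure.isProbabilityMeasure_map hZm.aemeasurable
  set μ := P.map Z with hμ
  have hFeq : (fun t : ℝ => (P {ω | Z ω ≤ t}).toReal) = ⇑(cdf μ) := by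
    funext t
    rw [cdf_eq_real, measureReal_def]
    congr 1
    rw [hμ, Measure.map_apply hZm measurableSet_Iic]
    rfl
  rw [hFeq, continuous_iff_continuousAt]
  intro x
  rw [(cdf μ).mono.continuousAt_iff_leftLim_eq_rightLim, (cdf μ).rightLim_eq]
  have hμx : μ {x} = 0 := by
    rw [hμ, Measure.map_apply hZm (measurableSet_singleton x)]
    exact hatomless x
  have hsing := (cdf μ).measure_singleton x
  rw [measure_cdf, hμx, eq_comm, ENNReal.ofReal_eq_zero] at hsing
  have hle : Function.leftLim (⇑(cdf μ)) x ≤ cdf μ x := (cdf μ).mono.leftLim_le le_rfl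
  linarith

open MeasureTheory ProbabilityTheory

theorem deriv_G_eq_two_cdf_sub_one
    {Ω : Type*} [MeasurableSpace Ω] (P : Measure Ω) [IsProbabilityMeasure P]
    (Z : Ω → ℝ) (hZm : Measurable Z) (hZ : Integrable Z P)
    (hatomless : ∀ z₀ : ℝ, P {ω | Z ω = z₀} = 0)
    (hsymm : Measure.map Z P = Measure.map (fun ω => -(Z ω)) P) :
    ∀ x : ℝ,
      HasDerivAt (fun x : ℝ => -|x| + 2 *
          (if 0 ≤ x then ∫ ω, min x (max (x + Z ω) 0) ∂P
           else ∫ ω, -(max x (min (x + Z ω) 0)) ∂P))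
        (2 * (P {ω | Z ω ≤ x}).toReal - 1) x := by
  intro x
  set F : ℝ → ℝ := fun t => (P {ω | Z ω ≤ t}).toReal with hF
  have hFcont : Continuous F := my_cont P Z hZm hatomless
  have hPt : ∀ t : ℝ, P {ω | -Z ω < t} = P {ω | Z ω ≤ t} := by
    intro t
    have h1 : P {ω | -Z ω < t} = (P.map (fun ω => -(Z ω))) (Set.Iio t) := by
      rw [Measure.map_apply (f := fun ω => -(Z ω)) hZm.neg measurableSet_Iio]
      rfl
    have h2 : (P.map Z) (Set.Iio t) = P {ω | Z ω < t} := by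
      rw [Measure.map_apply hZm measurableSet_Iio]
      rfl
    have h3 : P {ω | Z ω < t} = P {ω | Z ω ≤ t} := by
      refine le_antisymm (measure_mono fun ω (h : Z ω < t) => le_of_lt h) ?_
      calc P {ω | Z ω ≤ t} ≤ P ({ω | Z ω < t} ∪ {ω | Z ω = t}) :=
            measure_mono fun ω (h : Z ω ≤ t) => (h.lt_or_eq : ω ∈ {ω | Z ω < t} ∪ {ω | Z ω = t})
        _ ≤ P {ω | Z ω < t} + P {ω | Z ω = t} := measure_union_le _ _
        _ = P {ω | Z ω < t} := by rw [hatomless t, add_zero]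
    rw [h1, ← hsymm, h2, h3]
  have hEpos : ∀ y : ℝ, 0 ≤ y →
      ∫ ω, min y (max (y + Z ω) 0) ∂P = ∫ t in (0:ℝ)..y, F t := by
    intro y hy
    rw [intervalIntegral.integral_of_le hy, my_core P Z hZm hy]
    simp_rw [hPt]
    rfl
  have hFsum : ∀ s : ℝ, F s + F (-s) = 1 := by
    intro s
    have hmapZ : P {ω | Z ω ≤ -s} = P {ω | s ≤ Z ω} := by
      have h1 : P {ω | Z ω ≤ -s} = (P.map Z) (Set.Iic (-s)) := by
        rw [Measure.map_apply hZm measurableSet_Iic]; rfl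
      have h2 : (P.map (fun ω => -(Z ω))) (Set.Iic (-s)) = P {ω | s ≤ Z ω} := by
        rw [Measure.map_apply (f := fun ω => -(Z ω)) hZm.neg measurableSet_Iic]
        congr 1
        ext ω
        simp only [Set.mem_preimage, Set.mem_Iic, Set.mem_setOf_eq, neg_le_neg_iff]
      rw [h1, hsymm, h2]
    have hU : {ω | Z ω ≤ s} ∪ {ω | s ≤ Z ω} = Set.univ := by
      ext ω; simp [le_total]
    have hI : {ω | Z ω ≤ s} ∩ {ω | s ≤ Z ω} = {ω | Z ω = s} := by
      ext ω
      simp only [Set.mem_inter_iff, Set.mem_setOf_eq]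
      exact ⟨fun h => le_antisymm h.1 h.2, fun h => ⟨le_of_eq h, ge_of_eq h⟩⟩
    have hsum := measure_union_add_inter (μ := P) (t := {ω | s ≤ Z ω}) {ω | Z ω ≤ s}
      (measurableSet_le measurable_const hZm)
    rw [hU, hI, hatomless s, add_zero, measure_univ] at hsum
    have hfin1 : P {ω | Z ω ≤ s} ≠ ⊤ := measure_ne_top _ _
    have hfin2 : P {ω | s ≤ Z ω} ≠ ⊤ := measure_ne_top _ _
    have : F s + F (-s) = ((P {ω | Z ω ≤ s}) + (P {ω | s ≤ Z ω})).toReal := by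
      rw [ENNReal.toReal_add hfin1 hfin2, hF]
      simp only
      rw [hmapZ]
    rw [this, ← hsum]
    simp
  have hEneg : ∀ y : ℝ, y ≤ 0 →
      ∫ ω, -(max y (min (y + Z ω) 0)) ∂P = ∫ t in (0:ℝ)..(-y), F t := by
    intro y hy
    have hpt : ∀ z : ℝ, -(max y (min (y + z) 0)) = min (-y) (max (-y + -z) 0) := by
      intro z
      have hz : -y + -z = -(y + z) := by ring
      rw [hz]
      rcases le_total (y + z) 0 with h | h
      · rw [min_eq_left h, max_eq_left (by linarith : (0:ℝ) ≤ -(y + z))]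
        rcases le_total y (y + z) with h2 | h2
        · rw [max_eq_right h2, min_eq_right (by linarith)]
        · rw [max_eq_left h2, min_eq_left (by linarith)]
      · rw [min_eq_right h, max_eq_right (by linarith : -(y + z) ≤ 0),
          max_eq_right hy, min_eq_right (by linarith : (0:ℝ) ≤ -y)]
        simp
    have hg : Continuous fun z : ℝ => min (-y) (max (-y + z) 0) :=
      continuous_const.min ((continuous_const.add continuous_id).max continuous_const)
    calc ∫ ω, -(max y (min (y + Z ω) 0)) ∂P
        = ∫ ω, (fun z : ℝ => min (-y) (max (-y + z) 0)) (-(Z ω)) ∂P := by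
          refine integral_congr_ae (Filter.Eventually.of_forall fun ω => ?_)
          exact hpt (Z ω)
      _ = ∫ z, min (-y) (max (-y + z) 0) ∂(P.map (fun ω => -(Z ω))) :=
          (integral_map hZm.neg.aemeasurable hg.aestronglyMeasurable).symm
      _ = ∫ z, min (-y) (max (-y + z) 0) ∂(P.map Z) := by rw [← hsymm]
      _ = ∫ ω, min (-y) (max (-y + Z ω) 0) ∂P :=
          integral_map hZm.aemeasurable hg.aestronglyMeasurable
      _ = ∫ t in (0:ℝ)..(-y), F t := hEpos (-y) (by linarith)
  have hrefl : ∀ y : ℝ, ∫ t in (0:ℝ)..(-y), F t = -y + ∫ t in (0:ℝ)..y, F t := by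
    intro y
    have h1 : ∀ s : ℝ, F s = 1 - F (-s) := fun s => by have := hFsum s; linarith
    calc ∫ t in (0:ℝ)..(-y), F t
        = ∫ t in (0:ℝ)..(-y), (1 - F (-t)) := by
          refine intervalIntegral.integral_congr fun t _ => h1 t
      _ = (∫ _t in (0:ℝ)..(-y), (1:ℝ)) - ∫ t in (0:ℝ)..(-y), F (-t) := by
          have hFn : IntervalIntegrable (fun t : ℝ => F (-t)) volume 0 (-y) :=
            (hFcont.comp continuous_neg).intervalIntegrable _ _
          rw [intervalIntegral.integral_sub intervalIntegrable_const hFn]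
      _ = -y - ∫ t in (0:ℝ)..(-y), F (-t) := by simp
      _ = -y + ∫ t in (0:ℝ)..y, F t := by
          rw [intervalIntegral.integral_comp_neg (a := 0) (b := -y) (f := F)]
          rw [neg_neg, neg_zero, intervalIntegral.integral_symm]
          ring
  have hfun : (fun x : ℝ => -|x| + 2 *
      (if 0 ≤ x then ∫ ω, min x (max (x + Z ω) 0) ∂P
       else ∫ ω, -(max x (min (x + Z ω) 0)) ∂P))
      = fun x : ℝ => -x + 2 * ∫ t in (0:ℝ)..x, F t := by
    funext y
    by_cases hy : 0 ≤ y
    · rw [if_pos hy, abs_of_nonneg hy, hEpos y hy]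
    · push_neg at hy
      rw [if_neg (not_le.mpr hy), abs_of_neg hy, hEneg y hy.le, hrefl y]
      ring
  rw [hfun]
  have h1 : HasDerivAt (fun y : ℝ => ∫ t in (0:ℝ)..y, F t) (F x) x :=
    intervalIntegral.integral_hasDerivAt_right (hFcont.intervalIntegrable _ _)
      hFcont.aestronglyMeasurable.stronglyMeasurableAtFilter hFcont.continuousAt
  have h2 : HasDerivAt (fun y : ℝ => -y + 2 * ∫ t in (0:ℝ)..y, F t)
      (-1 + 2 * F x) x := by
    have hid : HasDerivAt (fun y : ℝ => -y) (-1 : ℝ) x := by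
      exact (hasDerivAt_id' x).neg
    exact hid.add (h1.const_mul 2)
  convert h2 using 1
  ring
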